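/- The Lie algebra m is closed under Chevalley–Jordan decomposition: for every X ∈ span_ℂ{X1, X2, X3, X4} there exist matrices S, N ∈ span_ℂ{X1, X2, X3, X4} such that X = S + N, S·N = N·S, N is nilpotent, and the endomorphism of ℂ⁴ defined by S is diagonalizable. -/

import Mathlib

open Matrix

noncomputable section

def X1 (α β : ℂ) : Matrix (Fin 4) (Fin 4) ℂ :=
  !![1,1,0,1; 1,1,0,0; α,β,0,0; 0,0,0,0]

def X2 (α β : ℂ) : Matrix (Fin 4) (Fin 4) ℂ :=
  !![1,1,0,0; 1,1,0,1; β-1,α+1,0,0; 0,0,0,0]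

def X3 : Matrix (Fin 4) (Fin 4) ℂ :=
  !![0,0,0,0; 0,0,0,0; 0,0,0,1; 0,0,0,0]

/-- The ℂ-linear span of {X1, X2, X3}. -/
def h (α β : ℂ) : Submodule ℂ (Matrix (Fin 4) (Fin 4) ℂ) :=
  Submodule.span ℂ {X1 α β, X2 α β, X3}
def X4 (α β : ℂ) : Matrix (Fin 4) (Fin 4) ℂ :=
  !![1,1,0,1/2; 1,1,0,1/2; (α+β)/2,(α+β)/2,0,(α+β)/4; 0,0,0,0]

/-- The ℂ-linear span of {X1, X2, X3, X4}. -/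
def m (α β : ℂ) : Submodule ℂ (Matrix (Fin 4) (Fin 4) ℂ) :=
  Submodule.span ℂ {X1 α β, X2 α β, X3, X4 α β}
/-- A matrix is diagonalizable if it is conjugate to a diagonal matrix. -/
def IsDiagonalizable {n : ℕ} (A : Matrix (Fin n) (Fin n) ℂ) : Prop :=
  ∃ P : Matrix (Fin n) (Fin n) ℂ, IsUnit P ∧ (P⁻¹ * A * P).IsDiag

/-- The nilpotent part, written explicitly. -/
def Nmat (α β a b c : ℂ) : Matrix (Fin 4) (Fin 4) ℂ :=
  !![0,0,0,(a-b)/2; 0,0,0,(b-a)/2;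
     (a-b)*(α-β)/2 - b, b - (a-b)*(α-β)/2, 0, c - (a+b)*(α+β)/4; 0,0,0,0]

set_option maxHeartbeats 1600000 in
lemma Nmat_eq (α β a b c d : ℂ) :
    a • X1 α β + (b • X2 α β + (c • X3 + d • X4 α β)) - (a + b + d) • X4 α β
      = Nmat α β a b c := by
  ext i j
  fin_cases i <;> fin_cases j <;>
    (simp [X1, X2, X3, X4, Nmat, Matrix.vecHead, Matrix.vecTail]; try ring)

set_option maxHeartbeats 1600000 in
lemma Nmat_sq_cube (α β a b c : ℂ) :
    Nmat α β a b c * Nmat α β a b c * Nmat α β a b c = 0 := by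
  ext i j
  fin_cases i <;> fin_cases j <;>
    simp [Nmat, Matrix.mul_apply, Fin.sum_univ_four, Matrix.vecHead, Matrix.vecTail]

lemma X4_mul_Nmat (α β a b c : ℂ) : X4 α β * Nmat α β a b c = 0 := by
  ext i j
  fin_cases i <;> fin_cases j <;>
    (simp [X4, Nmat, Matrix.mul_apply, Fin.sum_univ_four, Matrix.vecHead, Matrix.vecTail]; try ring)

lemma Nmat_mul_X4 (α β a b c : ℂ) : Nmat α β a b c * X4 α β = 0 := by
  ext i j
  fin_cases i <;> fin_cases j <;>
    (simp [X4, Nmat, Matrix.mul_apply, Fin.sum_univ_four, Matrix.vecHead, Matrix.vecTail]; try ring)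

/-- The matrix diagonalizing X4. -/
def Pmat (α β : ℂ) : Matrix (Fin 4) (Fin 4) ℂ :=
  !![1,1,0,1; 1,-1,0,0; (α+β)/2,0,1,0; 0,0,0,-2]

/-- The inverse of `Pmat`. -/
def Qmat (α β : ℂ) : Matrix (Fin 4) (Fin 4) ℂ :=
  !![1/2,1/2,0,1/4; 1/2,-1/2,0,1/4; -(α+β)/4,-(α+β)/4,1,-(α+β)/8; 0,0,0,-1/2]

def Dmat : Matrix (Fin 4) (Fin 4) ℂ :=
  !![2,0,0,0; 0,0,0,0; 0,0,0,0; 0,0,0,0]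

lemma Pmat_mul_Qmat (α β : ℂ) : Pmat α β * Qmat α β = 1 := by
  ext i j
  fin_cases i <;> fin_cases j <;>
    (simp [Pmat, Qmat, Matrix.mul_apply, Fin.sum_univ_four, Matrix.one_apply, Matrix.vecHead, Matrix.vecTail]; try ring)

lemma Qmat_mul_Pmat (α β : ℂ) : Qmat α β * Pmat α β = 1 := by
  ext i j
  fin_cases i <;> fin_cases j <;>
    (simp [Pmat, Qmat, Matrix.mul_apply, Fin.sum_univ_four, Matrix.one_apply, Matrix.vecHead, Matrix.vecTail]; try ring)

lemma Dmat_isDiag : Dmat.IsDiag := by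
  intro i j hij
  fin_cases i <;> fin_cases j <;>
    simp_all [Dmat, Matrix.vecHead, Matrix.vecTail]

lemma X4_mul_Pmat (α β : ℂ) : X4 α β * Pmat α β = Pmat α β * Dmat := by
  ext i j
  fin_cases i <;> fin_cases j <;>
    (simp [X4, Pmat, Dmat, Matrix.mul_apply, Fin.sum_univ_four, Matrix.vecHead, Matrix.vecTail]; try ring)

lemma smul_X4_diagonalizable (α β s : ℂ) : IsDiagonalizable (s • X4 α β) := by
  refine ⟨Pmat α β,
    ⟨⟨Pmat α β, Qmat α β, Pmat_mul_Qmat α β, Qmat_mul_Pmat α β⟩, rfl⟩, ?_⟩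
  have hinv : (Pmat α β)⁻¹ = Qmat α β := Matrix.inv_eq_right_inv (Pmat_mul_Qmat α β)
  have key : Qmat α β * X4 α β * Pmat α β = Dmat := by
    rw [Matrix.mul_assoc, X4_mul_Pmat, ← Matrix.mul_assoc, Qmat_mul_Pmat, one_mul]
  have : (Pmat α β)⁻¹ * (s • X4 α β) * Pmat α β = s • Dmat := by
    rw [hinv, Matrix.mul_smul, Matrix.smul_mul, key]
  rw [this]
  exact Dmat_isDiag.smul s

/-- m is closed under Chevalley–Jordan decomposition. -/
theorem m_closed_under_jordan (α β : ℂ) (hαβ : α + β ≠ 0) :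
    ∀ X ∈ m α β, ∃ S ∈ m α β, ∃ N ∈ m α β,
      X = S + N ∧ S * N = N * S ∧ IsNilpotent N ∧ IsDiagonalizable S := by
  intro X hX
  have hX4m : X4 α β ∈ m α β :=
    Submodule.subset_span (by simp [Set.mem_insert_iff])
  rw [m, Submodule.mem_span_insert] at hX
  obtain ⟨a, Y, hY, rfl⟩ := hX
  rw [Submodule.mem_span_insert] at hY
  obtain ⟨b, Z, hZ, rfl⟩ := hY
  rw [Submodule.mem_span_insert] at hZ
  obtain ⟨c, W, hW, rfl⟩ := hZ
  rw [Submodule.mem_span_singleton] at hW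
  obtain ⟨d, rfl⟩ := hW
  have hXm : a • X1 α β + (b • X2 α β + (c • X3 + d • X4 α β)) ∈ m α β := by
    apply Submodule.add_mem _ (Submodule.smul_mem _ _
      (Submodule.subset_span (by simp [Set.mem_insert_iff])))
    apply Submodule.add_mem _ (Submodule.smul_mem _ _
      (Submodule.subset_span (by simp [Set.mem_insert_iff])))
    apply Submodule.add_mem _ (Submodule.smul_mem _ _
      (Submodule.subset_span (by simp [Set.mem_insert_iff])))
    exact Submodule.smul_mem _ _ hX4m
  set S : Matrix (Fin 4) (Fin 4) ℂ := (a + b + d) • X4 α β with hS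
  have hSm : S ∈ m α β := Submodule.smul_mem _ _ hX4m
  refine ⟨S, hSm, a • X1 α β + (b • X2 α β + (c • X3 + d • X4 α β)) - S,
    Submodule.sub_mem _ hXm hSm, by abel, ?_, ?_, smul_X4_diagonalizable α β _⟩
  · have hN : a • X1 α β + (b • X2 α β + (c • X3 + d • X4 α β)) - S
        = Nmat α β a b c := Nmat_eq α β a b c d
    rw [hN]
    simp [hS, Matrix.smul_mul, Matrix.mul_smul, X4_mul_Nmat, Nmat_mul_X4]
  · have hN : a • X1 α β + (b • X2 α β + (c • X3 + d • X4 α β)) - S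
        = Nmat α β a b c := Nmat_eq α β a b c d
    rw [hN]
    exact ⟨3, by rw [pow_succ, pow_two, Nmat_sq_cube]⟩
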